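/- Let λ ≥ 0, τ > 0, β ∈ (0,1], and l_k = e^{-λkτ}(3/2)^{-β} Σ_{m=0}^{k} 3^{-m} g_m g_{k-m} with g_m = β(β+1)···(β+m-1)/m!. Then for any positive integer N and any real vector (v_0, ..., v_N), one has Σ_{n=0}^{N} (Σ_{k=0}^{n} l_k v_{n-k}) v_n ≥ 0. -/

import Mathlib

noncomputable def g (β : ℝ) (m : ℕ) : ℝ :=
  (∏ i ∈ Finset.range m, (β + i)) / (Nat.factorial m : ℝ)

noncomputable def lcoef (β lam τ : ℝ) (k : ℕ) : ℝ :=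
  Real.exp (-lam * k * τ) * (3 / 2 : ℝ) ^ (-β) *
    ∑ m ∈ Finset.range (k + 1), ((3 : ℝ) ^ m)⁻¹ * g β m * g β (k - m)

noncomputable def Kc (p q : ℝ) (k : ℕ) : ℝ := ∑ i ∈ Finset.range (k+1), p^i * q^(k-i)


lemma Kc_zero (p q : ℝ) : Kc p q 0 = 1 := by simp [Kc]

lemma Kc_one (p q : ℝ) : Kc p q 1 = p + q := by
  simp [Kc, Finset.sum_range_succ]; ring

lemma Kc_succ_left (p q : ℝ) (k : ℕ) : Kc p q (k+1) = q^(k+1) + p * Kc p q k := by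
  rw [Kc, Finset.sum_range_succ']
  simp only [pow_zero, one_mul, Nat.sub_zero]
  rw [Kc, Finset.mul_sum, add_comm]
  congr 1
  refine Finset.sum_congr rfl fun i hi => ?_
  have : k + 1 - (i+1) = k - i := by omega
  rw [this]; ring

lemma Kc_succ_right (p q : ℝ) (k : ℕ) : Kc p q (k+1) = p^(k+1) + q * Kc p q k := by
  rw [Kc, Finset.sum_range_succ]
  simp only [Nat.sub_self, pow_zero, mul_one]
  rw [Kc, Finset.mul_sum, add_comm]
  congr 1
  refine Finset.sum_congr rfl fun i hi => ?_
  have hik : i ≤ k := by simpa [Nat.lt_succ_iff] using hi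
  have : k + 1 - i = (k - i) + 1 := by omega
  rw [this, pow_succ]; ring

lemma Kc_rec (p q : ℝ) (k : ℕ) :
    Kc p q (k+2) = (p+q) * Kc p q (k+1) - p*q*Kc p q k := by
  have h1 := Kc_succ_right p q (k+1)
  have h2 := Kc_succ_right p q k
  have h3 := Kc_succ_left p q (k+1)
  have h4 : p^(k+1+1) = p * Kc p q (k+1) - p*q*Kc p q k := by
    rw [h2]; ring
  have : k+2 = k+1+1 := rfl
  rw [this, h1, h4]; ring

-- y n = ∑_{m ≤ n} K_{n-m} v_m equals the inner sum ∑_{k ≤ n} K_k v_{n-k}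
lemma inner_eq (p q : ℝ) (v : ℕ → ℝ) (n : ℕ) :
    ∑ k ∈ Finset.range (n+1), Kc p q k * v (n-k)
      = ∑ m ∈ Finset.range (n+1), Kc p q (n-m) * v m := by
  rw [← Finset.sum_range_reflect]
  refine Finset.sum_congr rfl fun j hj => ?_
  have hj' : j ≤ n := by simpa [Nat.lt_succ_iff] using hj
  have h1 : n + 1 - 1 - j = n - j := by omega
  have h2 : n - (n - j) = j := by omega
  rw [h1, h2]

-- the decomposition v_{n+2} = y_{n+2} - a y_{n+1} + b y_n
lemma ydec (p q : ℝ) (v : ℕ → ℝ) (n : ℕ)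
    (y : ℕ → ℝ) (hy : ∀ n, y n = ∑ m ∈ Finset.range (n+1), Kc p q (n-m) * v m) :
    y (n+2) - (p+q) * y (n+1) + p*q * y n = v (n+2) := by
  have e2 : y (n+2) = (∑ m ∈ Finset.range (n+1), Kc p q (n+2-m) * v m)
      + Kc p q 1 * v (n+1) + Kc p q 0 * v (n+2) := by
    rw [hy]
    rw [Finset.sum_range_succ, Finset.sum_range_succ]
    have a1 : n+2-(n+1) = 1 := by omega
    have a2 : n+2-(n+2) = 0 := by omega
    rw [a1, a2]
  have e1 : y (n+1) = (∑ m ∈ Finset.range (n+1), Kc p q (n+1-m) * v m)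
      + Kc p q 0 * v (n+1) := by
    rw [hy, Finset.sum_range_succ]
    have a3 : n+1-(n+1) = 0 := by omega
    rw [a3]
  have e0 : y n = ∑ m ∈ Finset.range (n+1), Kc p q (n-m) * v m := hy n
  rw [e2, e1, e0, Kc_zero, Kc_one]
  have hsum : (∑ m ∈ Finset.range (n+1), Kc p q (n+2-m) * v m)
      - (p+q) * (∑ m ∈ Finset.range (n+1), Kc p q (n+1-m) * v m)
      + p*q * (∑ m ∈ Finset.range (n+1), Kc p q (n-m) * v m) = 0 := by
    rw [Finset.mul_sum, Finset.mul_sum, ← Finset.sum_sub_distrib, ← Finset.sum_add_distrib]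
    refine Finset.sum_eq_zero fun m hm => ?_
    have hm' : m ≤ n := by simpa [Nat.lt_succ_iff] using hm
    have h2 : n + 2 - m = (n-m) + 2 := by omega
    have h1 : n + 1 - m = (n-m) + 1 := by omega
    rw [h2, h1, Kc_rec]; ring
  nlinarith [hsum]

lemma shift1 {f : ℕ → ℝ} {M : ℕ} (h0 : f 0 = 0) :
    ∑ n ∈ Finset.range (M+1), f n = ∑ n ∈ Finset.range M, f (n+1) := by
  rw [Finset.sum_range_succ']; simp [h0]

lemma Kform_nonneg (p q : ℝ) (hp0 : 0 ≤ p) (hp : p ≤ 1/3) (hq0 : 0 ≤ q) (hq : q ≤ 1)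
    (N : ℕ) (v : ℕ → ℝ) :
    0 ≤ ∑ n ∈ Finset.range (N+1), (∑ k ∈ Finset.range (n+1), Kc p q k * v (n-k)) * v n := by
  classical
  set y : ℕ → ℝ := fun n => ∑ m ∈ Finset.range (n+1), Kc p q (n-m) * v m with hy
  set z : ℕ → ℝ := fun j => if 2 ≤ j ∧ j ≤ N+2 then y (j-2) else 0 with hzdef
  have hz0 : z 0 = 0 := by simp [hzdef]
  have hz1 : z 1 = 0 := by simp [hzdef]
  have hztop : ∀ j, N+2 < j → z j = 0 := by
    intro j hj
    simp only [hzdef]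
    exact if_neg (by omega)
  have hz2 : ∀ n, n ≤ N → z (n+2) = y n := by
    intro n hn
    simp only [hzdef]
    rw [if_pos ⟨(by omega : 2 ≤ n+2), (by omega : n+2 ≤ N+2)⟩,
      (by omega : n+2-2 = n)]
  -- key decomposition
  have key : ∀ n, n ≤ N → z (n+2) - (p+q) * z (n+1) + p*q * z n = v n := by
    intro n hn
    match n with
    | 0 =>
      rw [hz2 0 hn, hz0, hz1]
      have : y 0 = v 0 := by simp only [hy]; simp [Kc_zero]
      rw [this]; ring
    | 1 =>
      rw [hz2 1 hn, hz2 0 (by omega), hz1]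
      have h1 : y 1 = Kc p q 1 * v 0 + Kc p q 0 * v 1 := by
        simp only [hy]
        rw [Finset.sum_range_succ, Finset.sum_range_succ]
        simp
      have h0 : y 0 = v 0 := by simp only [hy]; simp [Kc_zero]
      rw [h1, h0, Kc_zero, Kc_one]; ring
    | (m+2) =>
      rw [hz2 (m+2) hn, hz2 (m+1) (by omega), hz2 m (by omega)]
      exact ydec p q v m y (fun n => by simp only [hy])
  -- the quadratic form via z
  have hΦeq : ∑ n ∈ Finset.range (N+1),
        (∑ k ∈ Finset.range (n+1), Kc p q k * v (n-k)) * v n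
      = ∑ n ∈ Finset.range (N+3),
        (z (n+2) - (p+q) * z (n+1) + p*q * z n) * z (n+2) := by
    have step1 : ∑ n ∈ Finset.range (N+1),
          (∑ k ∈ Finset.range (n+1), Kc p q k * v (n-k)) * v n
        = ∑ n ∈ Finset.range (N+1),
          (z (n+2) - (p+q) * z (n+1) + p*q * z n) * z (n+2) := by
      refine Finset.sum_congr rfl fun n hn => ?_
      have hn' : n ≤ N := by simpa [Nat.lt_succ_iff] using hn
      rw [key n hn', hz2 n hn', inner_eq]
      ring
    rw [step1]
    refine Finset.sum_subset (Finset.range_subset_range.mpr (by omega)) fun x _ hx => ?_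
    have hx' : N + 2 < x + 2 := by
      simp only [Finset.mem_range] at hx
      omega
    rw [hztop (x+2) hx', mul_zero]
  rw [hΦeq]
  -- named sums
  set T := ∑ n ∈ Finset.range (N+5), (z n)^2 with hT
  set E0 := ∑ n ∈ Finset.range (N+3), (z (n+2))^2 with hE0
  set F0 := ∑ n ∈ Finset.range (N+3), (z (n+1))^2 with hF0
  set G0 := ∑ n ∈ Finset.range (N+3), (z n)^2 with hG0
  set E1 := ∑ n ∈ Finset.range (N+3), z (n+2) * z (n+1) with hE1
  set E2 := ∑ n ∈ Finset.range (N+3), z (n+2) * z n with hE2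
  set F1 := ∑ n ∈ Finset.range (N+3), z (n+1) * z n with hF1
  -- shift identities
  have hTE0 : T = E0 := by
    rw [hT, hE0]
    rw [show N+5 = (N+4)+1 from rfl, shift1 (by rw [hz0]; ring)]
    rw [show N+4 = (N+3)+1 from rfl, shift1 (by rw [hz1]; ring)]
  have hTF0 : T = F0 := by
    rw [hT, hF0]
    rw [show N+5 = (N+4)+1 from rfl, shift1 (by rw [hz0]; ring)]
    rw [show N+4 = (N+3)+1 from rfl, Finset.sum_range_succ]
    rw [hztop (N+3+1) (by omega)]
    ring
  have hTG0 : T = G0 := by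
    rw [hT, hG0]
    rw [show N+5 = (N+4)+1 from rfl, Finset.sum_range_succ,
        show N+4 = (N+3)+1 from rfl, Finset.sum_range_succ]
    rw [hztop (N+3) (by omega), hztop (N+3+1) (by omega)]
    ring
  have hE1F1 : E1 = F1 := by
    rw [hE1, hF1]
    have hS : ∑ n ∈ Finset.range (N+4), z (n+1) * z n
        = ∑ n ∈ Finset.range (N+3), z (n+2) * z (n+1) := by
      rw [show N+4 = (N+3)+1 from rfl, shift1 (by rw [hz0]; ring)]
    rw [← hS, show N+4 = (N+3)+1 from rfl, Finset.sum_range_succ]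
    rw [hztop (N+3+1) (by omega)]
    ring
  -- expansions
  have hPhi : ∑ n ∈ Finset.range (N+3),
      (z (n+2) - (p+q) * z (n+1) + p*q * z n) * z (n+2) = E0 - (p+q)*E1 + p*q*E2 := by
    rw [hE0, hE1, hE2, Finset.mul_sum, Finset.mul_sum,
      ← Finset.sum_sub_distrib, ← Finset.sum_add_distrib]
    exact Finset.sum_congr rfl fun n _ => by ring
  have hD1 : ∑ n ∈ Finset.range (N+3), (z (n+2) - z (n+1))^2 = E0 + F0 - 2*E1 := by
    rw [hE0, hF0, hE1, Finset.mul_sum, ← Finset.sum_add_distrib, ← Finset.sum_sub_distrib]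
    exact Finset.sum_congr rfl fun n _ => by ring
  have hD2 : ∑ n ∈ Finset.range (N+3), (z (n+2) - 2*z (n+1) + z n)^2
      = E0 + 4*F0 + G0 - 4*E1 - 4*F1 + 2*E2 := by
    rw [hE0, hF0, hG0, hE1, hF1, hE2, Finset.mul_sum, Finset.mul_sum, Finset.mul_sum,
      Finset.mul_sum, ← Finset.sum_add_distrib, ← Finset.sum_add_distrib,
      ← Finset.sum_sub_distrib, ← Finset.sum_sub_distrib, ← Finset.sum_add_distrib]
    exact Finset.sum_congr rfl fun n _ => by ring
  -- nonnegativity ingredients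
  have hTnn : 0 ≤ T := Finset.sum_nonneg fun n _ => sq_nonneg _
  have hD1nn : 0 ≤ ∑ n ∈ Finset.range (N+3), (z (n+2) - z (n+1))^2 :=
    Finset.sum_nonneg fun n _ => sq_nonneg _
  have hD2nn : 0 ≤ ∑ n ∈ Finset.range (N+3), (z (n+2) - 2*z (n+1) + z n)^2 :=
    Finset.sum_nonneg fun n _ => sq_nonneg _
  have hc0 : 0 ≤ 1 - (p+q) + p*q := by nlinarith
  have hc1 : 0 ≤ (p+q) - 4*(p*q) := by nlinarith
  have hc2 : 0 ≤ p*q := mul_nonneg hp0 hq0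
  have hfinal : E0 - (p+q)*E1 + p*q*E2
      = (1 - (p+q) + p*q) * T
        + ((p+q) - 4*(p*q))/2 * (∑ n ∈ Finset.range (N+3), (z (n+2) - z (n+1))^2)
        + (p*q)/2 * (∑ n ∈ Finset.range (N+3), (z (n+2) - 2*z (n+1) + z n)^2) := by
    rw [hD1, hD2, ← hTE0, ← hTF0, ← hTG0, hE1F1]
    ring
  rw [hPhi, hfinal]
  have := mul_nonneg hc0 hTnn
  have := mul_nonneg (by linarith : (0:ℝ) ≤ ((p+q) - 4*(p*q))/2) hD1nn
  have := mul_nonneg (by linarith : (0:ℝ) ≤ (p*q)/2) hD2nn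
  linarith

lemma prod_eq_Gamma (β : ℝ) (hβ0 : 0 < β) (m : ℕ) :
    ∏ i ∈ Finset.range m, (β + i) = Real.Gamma (β + m) / Real.Gamma β := by
  induction m with
  | zero => simp [Real.Gamma_pos_of_pos hβ0 |>.ne', div_self]
  | succ m ih =>
    rw [Finset.prod_range_succ, ih]
    have hne : β + (m:ℝ) ≠ 0 := by positivity
    have : Real.Gamma (β + (m+1 : ℕ)) = (β + m) * Real.Gamma (β + m) := by
      push_cast
      rw [show β + ((m:ℝ)+1) = (β + m) + 1 by ring, Real.Gamma_add_one hne]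
    rw [this]
    field_simp

lemma beta_real (β : ℝ) (hβ0 : 0 < β) (hβ1 : β < 1) (m : ℕ) :
    Real.Gamma ((m:ℝ) + β) * Real.Gamma (1 - β)
      = (Nat.factorial m : ℝ) *
        ∫ x in (0:ℝ)..1, x ^ ((m:ℝ) + β - 1) * (1-x) ^ (-β) := by
  have hu : 0 < Complex.re (((m:ℝ) + β : ℝ) : ℂ) := by
    simp only [Complex.ofReal_re]; positivity
  have hv : 0 < Complex.re ((1 - β : ℝ) : ℂ) := by
    simp only [Complex.ofReal_re]; linarith
  have key := Complex.Gamma_mul_Gamma_eq_betaIntegral hu hv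
  have hsum : (((m:ℝ) + β : ℝ) : ℂ) + ((1 - β : ℝ) : ℂ) = ((m:ℕ) : ℂ) + 1 := by
    push_cast; ring
  rw [hsum, Complex.Gamma_nat_eq_factorial] at key
  -- identify the beta integral with the real integral
  have hint : Complex.betaIntegral (((m:ℝ) + β : ℝ) : ℂ) ((1 - β : ℝ) : ℂ)
      = ((∫ x in (0:ℝ)..1, x ^ ((m:ℝ) + β - 1) * (1-x) ^ (-β) : ℝ) : ℂ) := by
    rw [Complex.betaIntegral, ← intervalIntegral.integral_ofReal]
    refine intervalIntegral.integral_congr fun x hx => ?_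
    rw [Set.uIcc_of_le (by norm_num : (0:ℝ) ≤ 1)] at hx
    obtain ⟨hx0, hx1⟩ := hx
    have h1 : ((x : ℂ) ^ ((((m:ℝ) + β : ℝ) : ℂ) - 1)) = ((x ^ ((m:ℝ) + β - 1) : ℝ) : ℂ) := by
      rw [Complex.ofReal_cpow hx0]
      push_cast
      ring_nf
    have h2 : ((1 - (x:ℂ)) ^ ((((1 - β : ℝ)) : ℂ) - 1)) = (((1-x) ^ (-β) : ℝ) : ℂ) := by
      rw [show ((1:ℂ) - (x:ℂ)) = (((1 - x : ℝ)) : ℂ) by push_cast; ring,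
        Complex.ofReal_cpow (by linarith)]
      push_cast
      ring_nf
    rw [h1, h2]
    push_cast
    ring
  rw [hint] at key
  rw [Complex.Gamma_ofReal, Complex.Gamma_ofReal] at key
  exact_mod_cast key

lemma gBeta (β : ℝ) (hβ0 : 0 < β) (hβ1 : β < 1) (m : ℕ) :
    g β m = (Real.Gamma β * Real.Gamma (1-β))⁻¹ *
      ∫ x in (0:ℝ)..1, x ^ ((m:ℝ) + β - 1) * (1-x) ^ (-β) := by
  have h1 := prod_eq_Gamma β hβ0 m
  have h2 := beta_real β hβ0 hβ1 m
  have hΓβ : 0 < Real.Gamma β := Real.Gamma_pos_of_pos hβ0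
  have hΓβ' : 0 < Real.Gamma (1-β) := Real.Gamma_pos_of_pos (by linarith)
  have hfac : (0:ℝ) < (Nat.factorial m : ℝ) := by positivity
  rw [g, h1, show β + (m:ℝ) = (m:ℝ) + β by ring]
  field_simp
  nlinarith [h2, hΓβ.ne', hΓβ'.ne']

lemma Ibeta (β : ℝ) (hβ0 : 0 < β) (hβ1 : β < 1) (m : ℕ) :
    IntervalIntegrable (fun x : ℝ => x ^ ((m:ℝ) + β - 1) * (1-x) ^ (-β))
      MeasureTheory.volume 0 1 := by
  have hu : 0 < Complex.re (((m:ℝ) + β : ℝ) : ℂ) := by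
    simp only [Complex.ofReal_re]; positivity
  have hv : 0 < Complex.re ((1 - β : ℝ) : ℂ) := by
    simp only [Complex.ofReal_re]; linarith
  have hC := Complex.betaIntegral_convergent hu hv
  rw [intervalIntegrable_iff] at hC ⊢
  rw [Set.uIoc_of_le (by norm_num : (0:ℝ) ≤ 1)] at hC ⊢
  refine (hC.re).congr ?_
  · refine ((MeasureTheory.ae_restrict_iff' measurableSet_Ioc).mpr
      (MeasureTheory.ae_of_all _ fun x hx => ?_))
    obtain ⟨hx0, hx1⟩ := hx
    have h1 : ((x : ℂ) ^ ((((m:ℝ) + β : ℝ) : ℂ) - 1)) = ((x ^ ((m:ℝ) + β - 1) : ℝ) : ℂ) := by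
      rw [Complex.ofReal_cpow hx0.le]
      push_cast
      ring_nf
    have h2 : ((1 - (x:ℂ)) ^ ((((1 - β : ℝ)) : ℂ) - 1)) = (((1-x) ^ (-β) : ℝ) : ℂ) := by
      rw [show ((1:ℂ) - (x:ℂ)) = (((1 - x : ℝ)) : ℂ) by push_cast; ring,
        Complex.ofReal_cpow (by linarith)]
      push_cast
      ring_nf
    simp only [h1, h2, ← Complex.ofReal_mul]
    simp

lemma Kc_eval (s t u : ℝ) (k : ℕ) :
    Kc (t*s/3) (u*s) k = s^k * ∑ m ∈ Finset.range (k+1), ((3:ℝ)^m)⁻¹ * t^m * u^(k-m) := by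
  rw [Kc, Finset.mul_sum]
  refine Finset.sum_congr rfl fun i hi => ?_
  have hik : i ≤ k := Nat.lt_succ_iff.mp (Finset.mem_range.mp hi)
  have hsk : s ^ k = s ^ i * s ^ (k - i) := by rw [← pow_add]; congr 1; omega
  rw [hsk, div_pow, mul_pow, mul_pow]
  have h3 : ((3:ℝ)^i)⁻¹ = (3:ℝ)⁻¹ ^ i := by rw [inv_pow]
  field_simp

lemma rpow_split (β : ℝ) (hβ1 : β < 1) (hβ0 : 0 < β) :
    ∀ w ∈ Set.Icc (0:ℝ) 1, ∀ j : ℕ,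
      w ^ ((j:ℝ) + β - 1) * (1-w) ^ (-β)
        = (w ^ (β-1) * (1-w) ^ (-β)) * w ^ j := by
  rintro w ⟨hw0, hw1⟩ j
  rcases eq_or_lt_of_le hw0 with h | h
  · subst h
    rcases Nat.eq_zero_or_pos j with hj | hj
    · subst hj
      norm_num
    · have hj1 : (1:ℝ) ≤ (j:ℝ) := by exact_mod_cast hj
      rw [Real.zero_rpow (by nlinarith : (j:ℝ) + β - 1 ≠ 0),
        Real.zero_rpow (by nlinarith : β - 1 ≠ 0), zero_pow (by omega : j ≠ 0)]
      ring
  · rw [show (j:ℝ) + β - 1 = (j:ℝ) + (β-1) by ring, Real.rpow_add h, Real.rpow_natCast]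
    ring

lemma flat3 (A : ℕ) (G : ((_ : (_ : ℕ) × ℕ) × ℕ) → ℝ) :
    ∑ x ∈ ((Finset.range (A+1)).sigma (fun n => Finset.range (n+1))).sigma
        (fun y => Finset.range (y.2+1)), G x
      = ∑ n ∈ Finset.range (A+1), ∑ k ∈ Finset.range (n+1),
          ∑ m ∈ Finset.range (k+1), G ⟨⟨n,k⟩,m⟩ := by
  rw [Finset.sum_sigma, Finset.sum_sigma]

set_option maxHeartbeats 1000000 in
/-- Lemma 3.4: the Toeplitz quadratic form built from the coefficients `l_k`
is nonnegative. -/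
theorem stmt11 (lam τ β : ℝ) (hlam : 0 ≤ lam) (hτ : 0 < τ)
    (hβ0 : 0 < β) (hβ1 : β ≤ 1) (N : ℕ) (hN : 0 < N) (v : ℕ → ℝ) :
    0 ≤ ∑ n ∈ Finset.range (N + 1),
      (∑ k ∈ Finset.range (n + 1), lcoef β lam τ k * v (n - k)) * v n := by
  classical
  set s := Real.exp (-(lam*τ)) with hsdef
  have hs0 : 0 < s := Real.exp_pos _
  have hs1 : s ≤ 1 := by
    rw [hsdef, Real.exp_le_one_iff]
    nlinarith
  have hexp : ∀ k : ℕ, Real.exp (-lam * (k:ℝ) * τ) = s ^ k := by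
    intro k
    rw [hsdef, ← Real.exp_nat_mul]
    congr 1; ring
  set c : ℝ := (3/2 : ℝ) ^ (-β) with hcdef
  have hc0 : (0:ℝ) ≤ c := Real.rpow_nonneg (by norm_num) _
  rcases eq_or_lt_of_le hβ1 with h1 | h1
  · -- case β = 1
    subst h1
    have hg1 : ∀ m, g 1 m = 1 := by
      intro m
      have hfac : (∏ i ∈ Finset.range m, ((1:ℝ) + i)) = (Nat.factorial m : ℝ) := by
        induction m with
        | zero => simp
        | succ m ih =>
          rw [Finset.prod_range_succ, ih, Nat.factorial_succ]
          push_cast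
          ring
      rw [g, hfac, div_self (by positivity)]
    have hl : ∀ k, lcoef 1 lam τ k = c * Kc (1*s/3) (1*s) k := by
      intro k
      rw [lcoef, hexp k, Kc_eval]
      rw [Finset.mul_sum, Finset.mul_sum, Finset.mul_sum]
      refine Finset.sum_congr rfl fun m hm => ?_
      rw [hg1, hg1]
      simp only [one_pow]
      ring
    have hsplit : ∑ n ∈ Finset.range (N + 1),
          (∑ k ∈ Finset.range (n + 1), lcoef 1 lam τ k * v (n - k)) * v n
        = c * ∑ n ∈ Finset.range (N + 1),
          (∑ k ∈ Finset.range (n + 1), Kc (1*s/3) (1*s) k * v (n - k)) * v n := by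
      rw [Finset.mul_sum]
      refine Finset.sum_congr rfl fun n _ => ?_
      have hinner : (∑ k ∈ Finset.range (n + 1), lcoef 1 lam τ k * v (n - k))
          = c * ∑ k ∈ Finset.range (n + 1), Kc (1*s/3) (1*s) k * v (n - k) := by
        rw [Finset.mul_sum]
        refine Finset.sum_congr rfl fun k _ => ?_
        rw [hl]
        ring
      rw [hinner]
      ring
    rw [hsplit]
    refine mul_nonneg hc0 (Kform_nonneg _ _ ?_ ?_ ?_ ?_ N v) <;> nlinarith
  · -- case β < 1
    set C : ℝ := (Real.Gamma β * Real.Gamma (1-β))⁻¹ with hCdef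
    have hC0 : 0 ≤ C := by
      rw [hCdef]
      have := Real.Gamma_pos_of_pos hβ0
      have := Real.Gamma_pos_of_pos (by linarith : 0 < 1 - β)
      positivity
    have hg : ∀ m : ℕ, g β m
        = C * ∫ x in (0:ℝ)..1, x ^ ((m:ℝ) + β - 1) * (1-x) ^ (-β) :=
      fun m => gBeta β hβ0 h1 m
    -- index set of triples n ≥ k ≥ m
    set S2 : Finset ((_ : ℕ) × ℕ) :=
      (Finset.range (N+1)).sigma (fun n => Finset.range (n+1)) with hS2def
    set S : Finset ((_ : (_ : ℕ) × ℕ) × ℕ) :=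
      S2.sigma (fun y => Finset.range (y.2+1)) with hSdef
    have hΦ1 : ∑ n ∈ Finset.range (N + 1),
          (∑ k ∈ Finset.range (n + 1), lcoef β lam τ k * v (n - k)) * v n
        = ∑ x ∈ S, (c * ((3:ℝ)^x.2)⁻¹ * s^x.1.2 * g β (x.1.2 - x.2) * v (x.1.1 - x.1.2)
            * v x.1.1) * g β x.2 := by
      rw [hSdef, hS2def, flat3]
      refine Finset.sum_congr rfl fun n _ => ?_
      rw [Finset.sum_mul]
      refine Finset.sum_congr rfl fun k _ => ?_
      rw [lcoef, hexp k, Finset.mul_sum, Finset.sum_mul, Finset.sum_mul]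
      refine Finset.sum_congr rfl fun m _ => ?_
      dsimp only
      ring
    rw [hΦ1]
    -- replace the inner g by an integral
    have hΦ2 : ∑ x ∈ S, (c * ((3:ℝ)^x.2)⁻¹ * s^x.1.2 * g β (x.1.2 - x.2) * v (x.1.1 - x.1.2)
            * v x.1.1) * g β x.2
        = C * ∫ t in (0:ℝ)..1, ∑ x ∈ S,
            (c * ((3:ℝ)^x.2)⁻¹ * s^x.1.2 * g β (x.1.2 - x.2) * v (x.1.1 - x.1.2) * v x.1.1)
              * (t ^ ((x.2:ℝ) + β - 1) * (1-t) ^ (-β)) := by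
      have hswap := intervalIntegral.integral_finset_sum (μ := MeasureTheory.volume)
        (a := (0:ℝ)) (b := 1) (s := S)
        (f := fun i t => (c * ((3:ℝ)^i.2)⁻¹ * s^i.1.2 * g β (i.1.2 - i.2) * v (i.1.1 - i.1.2)
            * v i.1.1) * (t ^ ((i.2:ℝ) + β - 1) * (1-t) ^ (-β)))
        (fun i _ => (Ibeta β hβ0 h1 i.2).const_mul _)
      rw [hswap, Finset.mul_sum]
      refine Finset.sum_congr rfl fun x _ => ?_
      rw [intervalIntegral.integral_const_mul, hg x.2]
      ring
    rw [hΦ2]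
    refine mul_nonneg hC0 (intervalIntegral.integral_nonneg (by norm_num) fun t ht => ?_)
    -- now fixed t ∈ [0,1]; same trick in u
    have hΨ1 : ∑ x ∈ S,
            (c * ((3:ℝ)^x.2)⁻¹ * s^x.1.2 * g β (x.1.2 - x.2) * v (x.1.1 - x.1.2) * v x.1.1)
              * (t ^ ((x.2:ℝ) + β - 1) * (1-t) ^ (-β))
        = C * ∫ u in (0:ℝ)..1, ∑ x ∈ S,
            (c * ((3:ℝ)^x.2)⁻¹ * s^x.1.2 * v (x.1.1 - x.1.2) * v x.1.1
              * (t ^ ((x.2:ℝ) + β - 1) * (1-t) ^ (-β)))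
              * (u ^ (((x.1.2 - x.2 : ℕ):ℝ) + β - 1) * (1-u) ^ (-β)) := by
      have hswap := intervalIntegral.integral_finset_sum (μ := MeasureTheory.volume)
        (a := (0:ℝ)) (b := 1) (s := S)
        (f := fun i u => (c * ((3:ℝ)^i.2)⁻¹ * s^i.1.2 * v (i.1.1 - i.1.2) * v i.1.1
              * (t ^ ((i.2:ℝ) + β - 1) * (1-t) ^ (-β)))
              * (u ^ (((i.1.2 - i.2 : ℕ):ℝ) + β - 1) * (1-u) ^ (-β)))
        (fun i _ => (Ibeta β hβ0 h1 (i.1.2 - i.2)).const_mul _)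
      rw [hswap, Finset.mul_sum]
      refine Finset.sum_congr rfl fun x _ => ?_
      rw [intervalIntegral.integral_const_mul, hg (x.1.2 - x.2)]
      ring
    rw [hΨ1]
    refine mul_nonneg hC0 (intervalIntegral.integral_nonneg (by norm_num) fun u hu => ?_)
    -- pointwise positivity via the kernel lemma
    have hker : ∑ x ∈ S,
            (c * ((3:ℝ)^x.2)⁻¹ * s^x.1.2 * v (x.1.1 - x.1.2) * v x.1.1
              * (t ^ ((x.2:ℝ) + β - 1) * (1-t) ^ (-β)))
              * (u ^ (((x.1.2 - x.2 : ℕ):ℝ) + β - 1) * (1-u) ^ (-β))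
        = ((t ^ (β-1) * (1-t) ^ (-β)) * (u ^ (β-1) * (1-u) ^ (-β)) * c) *
            ∑ n ∈ Finset.range (N+1),
              (∑ k ∈ Finset.range (n+1), Kc (t*s/3) (u*s) k * v (n-k)) * v n := by
      have e1 : ∀ x ∈ S,
          (c * ((3:ℝ)^x.2)⁻¹ * s^x.1.2 * v (x.1.1 - x.1.2) * v x.1.1
              * (t ^ ((x.2:ℝ) + β - 1) * (1-t) ^ (-β)))
              * (u ^ (((x.1.2 - x.2 : ℕ):ℝ) + β - 1) * (1-u) ^ (-β))
          = ((t ^ (β-1) * (1-t) ^ (-β)) * (u ^ (β-1) * (1-u) ^ (-β)) * c) *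
              (((3:ℝ)^x.2)⁻¹ * t^x.2 * u^(x.1.2 - x.2) * (s^x.1.2 * v (x.1.1 - x.1.2) * v x.1.1)) := by
        intro x _
        rw [rpow_split β h1 hβ0 t ht x.2, rpow_split β h1 hβ0 u hu (x.1.2 - x.2)]
        ring
      rw [Finset.sum_congr rfl e1, ← Finset.mul_sum]
      congr 1
      rw [hSdef, hS2def, flat3]
      refine Finset.sum_congr rfl fun n _ => ?_
      rw [Finset.sum_mul]
      refine Finset.sum_congr rfl fun k _ => ?_
      rw [Kc_eval, Finset.mul_sum, Finset.sum_mul, Finset.sum_mul]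
      refine Finset.sum_congr rfl fun m _ => ?_
      dsimp only
      ring
    rw [hker]
    have hIcc : t ∈ Set.Icc (0:ℝ) 1 := ht
    have hIccu : u ∈ Set.Icc (0:ℝ) 1 := hu
    obtain ⟨ht0, ht1⟩ := hIcc
    obtain ⟨hu0, hu1⟩ := hIccu
    refine mul_nonneg (mul_nonneg (mul_nonneg
      (mul_nonneg (Real.rpow_nonneg ht0 _) (Real.rpow_nonneg (by linarith) _))
      (mul_nonneg (Real.rpow_nonneg hu0 _) (Real.rpow_nonneg (by linarith) _))) hc0)
      (Kform_nonneg _ _ ?_ ?_ ?_ ?_ N v)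
    · positivity
    · nlinarith
    · positivity
    · nlinarith
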